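/- Let m be the number of indices j ∈ {1,...,N} with r_j = r_N, and let D_0 be a real number satisfying 1 + Σ_{j=1}^{N−m} r_j^{D_0} = m·r_N^{D_0}. Then every complex number ω with Σ_{j=1}^N r_j^ω = 1 satisfies D_0 ≤ Re ω ≤ D; moreover, the only real solution ω of Σ_{j=1}^N r_j^ω = 1 is ω = D. -/

import Mathlib

/-- With `m` the number of indices where the weight attains its maximum `w_N`, and `D_0`
a real number with `1 + ∑_{j=1}^{N-m} r_j^{D_0} = m r_N^{D_0}`, every complex solution `ω`
of `∑_j r_j^ω = 1` satisfies `D_0 ≤ Re ω ≤ D`, and the only real solution is `ω = D`. -/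
theorem complex_dimensions_in_strip (N : ℕ) (hN : 2 ≤ N) (w : Fin N → ℝ)
    (hw : ∀ j, 0 < w j) (hmono : Monotone w)
    (D : ℝ) (hD : ∑ j, Real.exp (-(w j) * D) = 1)
    (wN : ℝ) (hwN : wN = w ⟨N - 1, by omega⟩)
    (m : ℕ) (hm : m = Nat.card {j : Fin N // w j = wN})
    (D0 : ℝ)
    (hD0 : 1 + ∑ j : Fin N, (if (j : ℕ) < N - m then Real.exp (-(w j) * D0) else 0)
        = m * Real.exp (-wN * D0)) :
    (∀ ω : ℂ, ∑ j, Complex.exp (-(w j : ℂ) * ω) = 1 → D0 ≤ ω.re ∧ ω.re ≤ D) ∧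
      ∀ x : ℝ, ∑ j, Real.exp (-(w j) * x) = 1 → x = D := by
  classical
  -- wN is the maximum of the weights
  have hwNmax : ∀ j, w j ≤ wN := by
    intro j
    rw [hwN]
    exact hmono (by rw [Fin.le_def]; exact Nat.le_sub_one_of_lt j.isLt)
  have hwNpos : 0 < wN := by rw [hwN]; exact hw _
  -- the sum function is strictly antitone
  have hf : StrictAnti (fun x : ℝ => ∑ j, Real.exp (-(w j) * x)) := by
    intro x y hxy
    refine Finset.sum_lt_sum_of_nonempty ⟨⟨0, by omega⟩, Finset.mem_univ _⟩ ?_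
    intro j _
    exact Real.exp_lt_exp.mpr (by nlinarith [hw j])
  -- the set of indices attaining the max
  set T : Finset (Fin N) := Finset.univ.filter (fun j => w j = wN) with hTdef
  have htopT : (⟨N - 1, by omega⟩ : Fin N) ∈ T := by simp [hTdef, hwN]
  have hTne : T.Nonempty := ⟨_, htopT⟩
  set a : Fin N := T.min' hTne with hadef
  have haT : a ∈ T := T.min'_mem hTne
  have hwa : w a = wN := by simpa [hTdef] using haT
  have hiff : ∀ j, j ∈ T ↔ a ≤ j := by
    intro j
    constructor
    · intro hj; exact T.min'_le j hj
    · intro hj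
      have h1 := hmono hj
      have h2 := hwNmax j
      simp only [hTdef, Finset.mem_filter, Finset.mem_univ, true_and]
      linarith [hwa ▸ h1]
  have hTcard : T.card = m := by
    rw [hm, Nat.card_eq_fintype_card, Fintype.card_subtype]
  have hTIci : T = Finset.Ici a := by
    ext j; rw [hiff j, Finset.mem_Ici]
  have hma : (a : ℕ) = N - m := by
    have h1 : m = N - (a : ℕ) := by rw [← hTcard, hTIci, Fin.card_Ici]
    have := a.isLt
    omega
  -- characterization of the small indices
  have hT : ∀ j : Fin N, ((j : ℕ) < N - m ↔ w j ≠ wN) := by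
    intro j
    rw [← hma, ← not_le]
    constructor
    · intro h hwj
      exact h (Fin.le_def.mp ((hiff j).mp (by simp [hTdef, hwj])))
    · intro h hle
      exact h (by simpa [hTdef] using (hiff j).mpr (Fin.le_def.mpr hle))
  have hwlt : ∀ j : Fin N, (j : ℕ) < N - m → w j < wN := fun j hj =>
    lt_of_le_of_ne (hwNmax j) ((hT j).mp hj)
  have hfilter : Finset.univ.filter (fun j : Fin N => ¬ (j : ℕ) < N - m) = T := by
    ext j
    simp only [Finset.mem_filter, Finset.mem_univ, true_and, hTdef]
    rw [hT j, not_not]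
  -- splitting lemmas
  have hsplitR : ∀ x : ℝ, ∑ j, Real.exp (-(w j) * x)
      = (∑ j : Fin N, if (j : ℕ) < N - m then Real.exp (-(w j) * x) else 0)
        + m * Real.exp (-wN * x) := by
    intro x
    rw [← Finset.sum_filter_add_sum_filter_not Finset.univ (fun j : Fin N => (j : ℕ) < N - m)]
    congr 1
    · rw [Finset.sum_filter]
    · rw [hfilter]
      have hc : ∑ j ∈ T, Real.exp (-(w j) * x) = ∑ _j ∈ T, Real.exp (-wN * x) :=
        Finset.sum_congr rfl fun j hj => by
          have hwj : w j = wN := by simpa [hTdef] using hj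
          rw [hwj]
      rw [hc, Finset.sum_const, hTcard, nsmul_eq_mul]
  have hsplitC : ∀ z : ℂ, ∑ j, Complex.exp (-(w j : ℂ) * z)
      = (∑ j : Fin N, if (j : ℕ) < N - m then Complex.exp (-(w j : ℂ) * z) else 0)
        + m * Complex.exp (-(wN : ℂ) * z) := by
    intro z
    rw [← Finset.sum_filter_add_sum_filter_not Finset.univ (fun j : Fin N => (j : ℕ) < N - m)]
    congr 1
    · rw [Finset.sum_filter]
    · rw [hfilter]
      have hc : ∑ j ∈ T, Complex.exp (-(w j : ℂ) * z) = ∑ _j ∈ T, Complex.exp (-(wN : ℂ) * z) :=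
        Finset.sum_congr rfl fun j hj => by
          have hwj : w j = wN := by simpa [hTdef] using hj
          rw [hwj]
      rw [hc, Finset.sum_const, hTcard, nsmul_eq_mul]
  -- real parts of the exponentials
  have hre : ∀ (r : ℝ) (z : ℂ), ‖Complex.exp (-(r : ℂ) * z)‖ = Real.exp (-r * z.re) := by
    intro r z
    rw [Complex.norm_exp]
    congr 1
    simp [Complex.mul_re]
  -- expansion after multiplying by exp (wN * x)
  have hexpand : ∀ x : ℝ,
      (1 + ∑ j : Fin N, if (j : ℕ) < N - m then Real.exp (-(w j) * x) else 0) * Real.exp (wN * x)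
      = Real.exp (wN * x)
        + ∑ j : Fin N, (if (j : ℕ) < N - m then Real.exp ((wN - w j) * x) else 0) := by
    intro x
    rw [add_mul, one_mul, Finset.sum_mul]
    congr 1
    refine Finset.sum_congr rfl fun j _ => ?_
    split
    · rw [← Real.exp_add]; congr 1; ring
    · simp
  have hexpinv : ∀ x : ℝ, Real.exp (-wN * x) * Real.exp (wN * x) = 1 := by
    intro x
    rw [← Real.exp_add]
    norm_num
  have hkey1 : (1 + ∑ j : Fin N, if (j : ℕ) < N - m then Real.exp (-(w j) * D0) else 0)
      * Real.exp (wN * D0) = m := by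
    rw [hD0, mul_assoc, hexpinv, mul_one]
  -- lower bound lemma
  have hlow : ∀ x : ℝ,
      (m : ℝ) * Real.exp (-wN * x)
        ≤ 1 + ∑ j : Fin N, (if (j : ℕ) < N - m then Real.exp (-(w j) * x) else 0) → D0 ≤ x := by
    intro x hx
    by_contra h
    push_neg at h
    have hE : (0 : ℝ) < Real.exp (wN * x) := Real.exp_pos _
    have h1 : (m : ℝ) ≤ (1 + ∑ j : Fin N, if (j : ℕ) < N - m then Real.exp (-(w j) * x) else 0)
        * Real.exp (wN * x) := by
      have h2 := mul_le_mul_of_nonneg_right hx hE.le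
      rwa [mul_assoc, hexpinv, mul_one] at h2
    have h2 : (1 + ∑ j : Fin N, if (j : ℕ) < N - m then Real.exp (-(w j) * x) else 0)
          * Real.exp (wN * x)
        < (1 + ∑ j : Fin N, if (j : ℕ) < N - m then Real.exp (-(w j) * D0) else 0)
          * Real.exp (wN * D0) := by
      rw [hexpand, hexpand]
      refine add_lt_add_of_lt_of_le (Real.exp_lt_exp.mpr (by nlinarith)) ?_
      refine Finset.sum_le_sum fun j _ => ?_
      split
      · next hc =>
        have hwj := hwlt j hc
        exact Real.exp_le_exp.mpr (by nlinarith)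
      · exact le_rfl
    rw [hkey1] at h2
    linarith
  constructor
  · intro ω hω
    constructor
    · -- lower bound
      apply hlow
      have hsum := hsplitC ω
      rw [hω] at hsum
      have heq : (m : ℂ) * Complex.exp (-(wN : ℂ) * ω)
          = 1 - ∑ j : Fin N, (if (j : ℕ) < N - m then Complex.exp (-(w j : ℂ) * ω) else 0) := by
        linear_combination -hsum
      have habs : ‖(m : ℂ) * Complex.exp (-(wN : ℂ) * ω)‖
          = (m : ℝ) * Real.exp (-wN * ω.re) := by
        rw [norm_mul, hre]
        simp
      have hb1 : ‖
            (1 - ∑ j : Fin N, (if (j : ℕ) < N - m then Complex.exp (-(w j : ℂ) * ω) else 0))‖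
          ≤ 1 + ‖
            (∑ j : Fin N, (if (j : ℕ) < N - m then Complex.exp (-(w j : ℂ) * ω) else 0))‖ := by
        have hns := norm_sub_le (1 : ℂ)
          (∑ j : Fin N, (if (j : ℕ) < N - m then Complex.exp (-(w j : ℂ) * ω) else 0))
        simpa using hns
      have hb2 : ‖
            (∑ j : Fin N, (if (j : ℕ) < N - m then Complex.exp (-(w j : ℂ) * ω) else 0))‖
          ≤ ∑ j : Fin N, (if (j : ℕ) < N - m then Real.exp (-(w j) * ω.re) else 0) := by
        refine le_trans (norm_sum_le _ _) (Finset.sum_le_sum fun j _ => ?_)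
        split
        · exact le_of_eq (hre _ _)
        · simp
      rw [← habs, heq]
      exact le_trans hb1 (by linarith)
    · -- upper bound
      by_contra h
      push_neg at h
      have h1 : (1 : ℝ) ≤ ∑ j, Real.exp (-(w j) * ω.re) := by
        calc (1 : ℝ) = ‖∑ j, Complex.exp (-(w j : ℂ) * ω)‖ := by rw [hω]; simp
        _ ≤ ∑ j, ‖Complex.exp (-(w j : ℂ) * ω)‖ := norm_sum_le _ _
        _ = ∑ j, Real.exp (-(w j) * ω.re) := Finset.sum_congr rfl fun j _ => hre _ _
      have h2 := hf h
      simp only at h2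
      linarith
  · intro x hx
    exact hf.injective (hx.trans hD.symm)
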